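/- Under the stated hypotheses, the derivative with respect to x of the composition x ↦ G(x, φ(x)) vanishes at exactly one point, namely x̃ = ((a00·a01²·a10·a11²(p00-p10)(p01-p11)²)^(1/3) + (a00·a11·p00 - a01·a10·p10))/(a00·a11 - a01·a10). -/

import Mathlib

/-- Real cube root. -/
noncomputable def cbrt (t : ℝ) : ℝ := if 0 ≤ t then t ^ ((1 : ℝ) / 3) else -((-t) ^ ((1 : ℝ) / 3))

lemma cbrt_nonneg_case (t : ℝ) (h : 0 ≤ t) : (t ^ 3) ^ ((1:ℝ)/3) = t := by
  rw [← Real.rpow_natCast t 3, ← Real.rpow_mul h]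
  norm_num

lemma cbrt_cube (t : ℝ) : cbrt (t ^ 3) = t := by
  unfold cbrt
  rcases le_or_gt 0 t with h | h
  · rw [if_pos (by positivity), cbrt_nonneg_case t h]
  · have h3 : t ^ 3 < 0 := by nlinarith [mul_pos_of_neg_of_neg h h]
    rw [if_neg (not_le.mpr h3), show -(t^3) = (-t)^3 by ring,
      cbrt_nonneg_case (-t) (by linarith)]
    ring

lemma cube_cbrt (s : ℝ) : (cbrt s) ^ 3 = s := by
  unfold cbrt
  rcases le_or_gt 0 s with h | h
  · rw [if_pos h, ← Real.rpow_natCast _ 3, ← Real.rpow_mul h]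
    norm_num
  · rw [if_neg (not_le.mpr h)]
    have : ((-s) ^ ((1:ℝ)/3)) ^ 3 = -s := by
      rw [← Real.rpow_natCast _ 3, ← Real.rpow_mul (by linarith)]
      norm_num
    nlinarith [this]

/-- The derivative of `x ↦ G(x, φ(x))` (on the domain of `φ`) vanishes at exactly one point,
`x̃ = (cbrt(a00a01²a10a11²(p00-p10)(p01-p11)²) + a00a11p00 - a01a10p10)/(a00a11 - a01a10)`. -/
theorem unique_critical_point_on_singular_set
    (a00 a01 a10 a11 p00 p01 p10 p11 : ℝ)
    (h00 : a00 ≠ 0) (h01 : a01 ≠ 0) (h10 : a10 ≠ 0) (h11 : a11 ≠ 0)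
    (hdet : a00 * a11 - a01 * a10 ≠ 0) (hp0 : p00 ≠ p10) (hp1 : p01 ≠ p11)
    (φ : ℝ → ℝ)
    (hφ : ∀ x : ℝ, φ x =
      -(((-(a00 * a11 * p11) + a01 * a10 * p01) * x +
          (a00 * a11 * p00 * p11 - a01 * a10 * p01 * p10)) /
        ((a00 * a11 - a01 * a10) * x + (-(a00 * a11 * p00) + a01 * a10 * p10)))) :
    ∀ x : ℝ, (a00 * a11 - a01 * a10) * x + (-(a00 * a11 * p00) + a01 * a10 * p10) ≠ 0 →
      (deriv (fun s : ℝ =>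
          ((a00 * (s - p00) ^ 2 + a01 * (φ s - p01) ^ 2,
            a10 * (s - p10) ^ 2 + a11 * (φ s - p11) ^ 2) : ℝ × ℝ)) x = 0 ↔
        x = (cbrt (a00 * a01 ^ 2 * a10 * a11 ^ 2 * (p00 - p10) * (p01 - p11) ^ 2) +
              (a00 * a11 * p00 - a01 * a10 * p10)) / (a00 * a11 - a01 * a10)) := by
  intro x hx
  have hnum : HasDerivAt (fun s : ℝ => (-(a00 * a11 * p11) + a01 * a10 * p01) * s +
      (a00 * a11 * p00 * p11 - a01 * a10 * p01 * p10)) (-(a00 * a11 * p11) + a01 * a10 * p01) x := by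
    simpa using ((hasDerivAt_id x).const_mul (-(a00 * a11 * p11) + a01 * a10 * p01)).add_const
      (a00 * a11 * p00 * p11 - a01 * a10 * p01 * p10)
  have hden : HasDerivAt (fun s : ℝ => (a00 * a11 - a01 * a10) * s +
      (-(a00 * a11 * p00) + a01 * a10 * p10)) (a00 * a11 - a01 * a10) x := by
    simpa using ((hasDerivAt_id x).const_mul (a00 * a11 - a01 * a10)).add_const
      (-(a00 * a11 * p00) + a01 * a10 * p10)
  have hφd : HasDerivAt φ
      (-(((-(a00 * a11 * p11) + a01 * a10 * p01) *
          ((a00 * a11 - a01 * a10) * x + (-(a00 * a11 * p00) + a01 * a10 * p10)) -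
        ((-(a00 * a11 * p11) + a01 * a10 * p01) * x +
          (a00 * a11 * p00 * p11 - a01 * a10 * p01 * p10)) * (a00 * a11 - a01 * a10)) /
        ((a00 * a11 - a01 * a10) * x + (-(a00 * a11 * p00) + a01 * a10 * p10)) ^ 2)) x := by
    exact ((hnum.div hden hx).neg).congr_of_eventuallyEq (Filter.Eventually.of_forall hφ)
  have hf1 := ((((hasDerivAt_id x).sub_const p00).pow 2).const_mul a00).add
    (((hφd.sub_const p01).pow 2).const_mul a01)
  have hf2 := ((((hasDerivAt_id x).sub_const p10).pow 2).const_mul a10).add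
    (((hφd.sub_const p11).pow 2).const_mul a11)
  simp only [id_eq] at hf1 hf2
  have hD := hf1.prodMk hf2
  simp only [Pi.add_apply, Pi.pow_apply, Nat.cast_ofNat, show (2:ℕ) - 1 = 1 from rfl, pow_one,
    mul_one] at hD
  rw [hD.deriv, Prod.mk_eq_zero, hφ x]
  constructor
  · rintro ⟨h1, h2⟩
    set D := (a00 * a11 - a01 * a10) * x + (-(a00 * a11 * p00) + a01 * a10 * p10) with hDdef
    field_simp at h1 h2
    simp only [hDdef] at h1 h2
    have k1 : (x - p00) * (((a00 * a11 - a01 * a10) * x + (-(a00 * a11 * p00) + a01 * a10 * p10)) ^ 3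
        - a00 * a01 ^ 2 * a10 * a11 ^ 2 * (p00 - p10) * (p01 - p11) ^ 2) = 0 := by
      apply mul_left_cancel₀ (show (2:ℝ) * a00 ≠ 0 from mul_ne_zero two_ne_zero h00)
      rw [mul_zero]
      linear_combination h1
    have k2 : (x - p10) * (((a00 * a11 - a01 * a10) * x + (-(a00 * a11 * p00) + a01 * a10 * p10)) ^ 3
        - a00 * a01 ^ 2 * a10 * a11 ^ 2 * (p00 - p10) * (p01 - p11) ^ 2) = 0 := by
      apply mul_left_cancel₀ (show (2:ℝ) * a10 ≠ 0 from mul_ne_zero two_ne_zero h10)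
      rw [mul_zero]
      linear_combination h2
    have key : ((a00 * a11 - a01 * a10) * x + (-(a00 * a11 * p00) + a01 * a10 * p10)) ^ 3
        = a00 * a01 ^ 2 * a10 * a11 ^ 2 * (p00 - p10) * (p01 - p11) ^ 2 := by
      rcases mul_eq_zero.mp k1 with c1 | c1
      · rcases mul_eq_zero.mp k2 with c2 | c2
        · exact absurd (by linarith : p00 = p10) hp0
        · linarith
      · linarith
    have hc : cbrt (a00 * a01 ^ 2 * a10 * a11 ^ 2 * (p00 - p10) * (p01 - p11) ^ 2)
        = (a00 * a11 - a01 * a10) * x + (-(a00 * a11 * p00) + a01 * a10 * p10) := by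
      rw [← key, cbrt_cube]
    rw [hc, eq_div_iff hdet]
    ring
  · intro h
    have hdd : (a00 * a11 - a01 * a10) * x + (-(a00 * a11 * p00) + a01 * a10 * p10)
        = cbrt (a00 * a01 ^ 2 * a10 * a11 ^ 2 * (p00 - p10) * (p01 - p11) ^ 2) := by
      rw [h]
      field_simp
      ring
    have hM : ((a00 * a11 - a01 * a10) * x + (-(a00 * a11 * p00) + a01 * a10 * p10)) ^ 3
        = a00 * a01 ^ 2 * a10 * a11 ^ 2 * (p00 - p10) * (p01 - p11) ^ 2 := by
      rw [hdd, cube_cbrt]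
    constructor
    · set D := (a00 * a11 - a01 * a10) * x + (-(a00 * a11 * p00) + a01 * a10 * p10) with hDdef
      field_simp
      simp only [hDdef] at hM ⊢
      linear_combination (2 * a00 * (x - p00)) * hM
    · set D := (a00 * a11 - a01 * a10) * x + (-(a00 * a11 * p00) + a01 * a10 * p10) with hDdef
      field_simp
      simp only [hDdef] at hM ⊢
      linear_combination (2 * a10 * (x - p10)) * hM
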